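/- Let E and F be weighted geometric mean closed Archimedean vector lattices, let n ≥ 1, and let r₁, …, rₙ ∈ (0,1) satisfy r₁ + ⋯ + rₙ = 1. A linear map T : E → F is a vector lattice homomorphism if and only if T( △ₖ₌₁ⁿ (fₖ, rₖ) ) = △ₖ₌₁ⁿ ( T(fₖ), rₖ ) for all f₁, …, fₙ ∈ E. -/

import Mathlib

/-- The set whose infimum (when it exists) is the weighted geometric mean
`△ₖ₌₁ⁿ (fₖ, rₖ) = inf { Σₖ rₖ·θₖ·|fₖ| : θₖ ∈ (0,∞), ∏ₖ θₖ^{rₖ} = 1 }`. -/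
def wSet {E : Type*} [AddCommGroup E] [Lattice E] [Module ℝ E]
    (n : ℕ) (f : Fin n → E) (r : Fin n → ℝ) : Set E :=
  {x | ∃ θ : Fin n → ℝ, (∀ k, 0 < θ k) ∧ (∏ k, θ k ^ r k) = 1 ∧
      x = ∑ k, (r k * θ k) • |f k|}

section Aux

variable {E : Type*} [AddCommGroup E] [Lattice E]
    [CovariantClass E E (· + ·) (· ≤ ·)] [Module ℝ E] [PosSMulMono ℝ E]

/-- Monotonicity of scalar multiplication in the scalar, for a nonnegative vector. -/
lemma smul_coeff_mono {c d : ℝ} {u : E} (h : c ≤ d) (hu : 0 ≤ u) : c • u ≤ d • u := by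
  have h0 : (0 : E) ≤ (d - c) • u := smul_nonneg (by linarith) hu
  calc c • u ≤ c • u + (d - c) • u := le_add_of_nonneg_right h0
    _ = d • u := by rw [← add_smul]; ring_nf

/-- Sums of nonnegative elements are nonnegative (covariant-class version). -/
lemma lsum_nonneg {ι : Type*} (t : Finset ι) (g : ι → E) (hg : ∀ i ∈ t, 0 ≤ g i) :
    0 ≤ ∑ i ∈ t, g i := by
  classical
  induction t using Finset.cons_induction with
  | empty => simp
  | cons a t ha ih =>
      rw [Finset.sum_cons]
      have h1 : 0 ≤ g a := hg a (Finset.mem_cons_self a t)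
      have h2 : 0 ≤ ∑ i ∈ t, g i := ih fun i hi => hg i (Finset.mem_cons_of_mem hi)
      calc (0 : E) ≤ g a := h1
        _ = g a + 0 := (add_zero _).symm
        _ ≤ g a + ∑ i ∈ t, g i := add_le_add_right h2 _

/-- Termwise comparison of sums (covariant-class version). -/
lemma lsum_le_lsum {ι : Type*} (t : Finset ι) (g₁ g₂ : ι → E) (hg : ∀ i ∈ t, g₁ i ≤ g₂ i) :
    ∑ i ∈ t, g₁ i ≤ ∑ i ∈ t, g₂ i := by
  classical
  induction t using Finset.cons_induction with
  | empty => simp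
  | cons a t ha ih =>
      rw [Finset.sum_cons, Finset.sum_cons]
      have h1 : g₁ a + ∑ i ∈ t, g₁ i ≤ g₁ a + ∑ i ∈ t, g₂ i :=
        add_le_add_right (ih fun i hi => hg i (Finset.mem_cons_of_mem hi)) _
      have h2 : g₁ a + ∑ i ∈ t, g₂ i ≤ g₂ a + ∑ i ∈ t, g₂ i := by
        rw [add_comm (g₁ a), add_comm (g₂ a)]
        exact add_le_add_right (hg a (Finset.mem_cons_self a t)) _
      exact h1.trans h2

/-- `|x|` is the least element of the weighted geometric mean set of the constant family. -/
lemma isLeast_wSet_const (n : ℕ) (r : Fin n → ℝ)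
    (hr : ∀ k, 0 < r k ∧ r k < 1) (hr1 : (∑ k, r k) = 1) (x : E) :
    IsLeast (wSet n (fun _ => x) r) |x| := by
  constructor
  · exact ⟨fun _ => 1, fun _ => one_pos, by simp,
      by simp_rw [mul_one]; rw [← Finset.sum_smul, hr1, one_smul]⟩
  · rintro y ⟨θ, hθp, hθprod, rfl⟩
    have hge : (1 : ℝ) ≤ ∑ k, r k * θ k := by
      have := Real.geom_mean_le_arith_mean_weighted Finset.univ r θ
        (fun k _ => (hr k).1.le) hr1 (fun k _ => (hθp k).le)
      rw [hθprod] at this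
      exact this
    calc |x| = (1 : ℝ) • |x| := (one_smul ℝ _).symm
      _ ≤ (∑ k, r k * θ k) • |x| := smul_coeff_mono hge (abs_nonneg x)
      _ = ∑ k, (r k * θ k) • |x| := Finset.sum_smul

end Aux

/-- Splitting a sum against an `if k = j` weight. -/
lemma sum_mul_ite_erase {n : ℕ} (j : Fin n) (w g : Fin n → ℝ) (A : ℝ) :
    (∑ k, w k * (if k = j then A else g k))
      = w j * A + ∑ k ∈ Finset.univ.erase j, w k * g k := by
  rw [← Finset.add_sum_erase Finset.univ (fun k => w k * (if k = j then A else g k))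
    (Finset.mem_univ j), if_pos rfl]
  congr 1
  exact Finset.sum_congr rfl fun k hk => by rw [if_neg (Finset.ne_of_mem_erase hk)]

set_option maxHeartbeats 1600000 in
/-- A finite net of admissible weight vectors: for every `ε ∈ (0,1]` there is a finite
family of admissible `θ`'s such that every admissible `θ*` is `ε`-dominated coordinatewise
by some member of the family. -/
lemma netLemma (n : ℕ) (hn : 1 ≤ n) (r : Fin n → ℝ)
    (hr : ∀ k, 0 < r k ∧ r k < 1) (hr1 : (∑ k, r k) = 1)
    {ε : ℝ} (hε : 0 < ε) (hε1 : ε ≤ 1) :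
    ∃ (ι : Type) (_ : Fintype ι) (_ : Nonempty ι) (Θ : ι → Fin n → ℝ),
      (∀ i, (∀ k, 0 < Θ i k) ∧ (∏ k, Θ i k ^ r k) = 1) ∧
      ∀ θ : Fin n → ℝ, (∀ k, 0 < θ k) → (∏ k, θ k ^ r k) = 1 →
        ∃ i, ∀ k, Θ i k ≤ θ k + ε := by
  classical
  have hnne : Nonempty (Fin n) := Fin.pos_iff_nonempty.mp (by omega)
  -- the minimum of the weights
  set s : ℝ := Finset.univ.inf' Finset.univ_nonempty r with hs_def
  have hsle : ∀ k, s ≤ r k := fun k => Finset.inf'_le _ (Finset.mem_univ k)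
  have hs0 : 0 < s := by
    rw [hs_def, Finset.lt_inf'_iff]
    exact fun k _ => (hr k).1
  have hs1 : s ≤ 1 := by
    obtain ⟨k⟩ := hnne
    exact (hsle k).trans (hr k).2.le
  -- parameters
  set L : ℝ := -Real.log ε with hL_def
  have hL0 : 0 ≤ L := by
    rw [hL_def, neg_nonneg]
    exact Real.log_nonpos hε.le hε1
  set C : ℝ := Real.exp ((L + 2) * (1 / s + 1)) with hC_def
  have hC0 : 0 < C := Real.exp_pos _
  have hεC : 0 < ε / C := div_pos hε hC0
  set h : ℝ := min 1 (s * Real.log (1 + ε / C)) with hh_def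
  have hh0 : 0 < h :=
    lt_min one_pos (mul_pos hs0 (Real.log_pos (by linarith)))
  have hh1 : h ≤ 1 := min_le_left _ _
  have hhs : h ≤ s * Real.log (1 + ε / C) := min_le_right _ _
  set N₁ : ℤ := ⌈L / h⌉ with hN₁_def
  have hN₁0 : 0 ≤ N₁ := Int.ceil_nonneg (div_nonneg hL0 hh0.le)
  have hN₁h : L ≤ (N₁ : ℝ) * h := by
    have h1 := Int.le_ceil (L / h)
    calc L = L / h * h := by field_simp
      _ ≤ (N₁ : ℝ) * h := mul_le_mul_of_nonneg_right h1 hh0.le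
  have hN₁h' : (N₁ : ℝ) * h ≤ L + h := by
    have h1 := Int.ceil_lt_add_one (L / h)
    calc (N₁ : ℝ) * h ≤ (L / h + 1) * h := mul_le_mul_of_nonneg_right h1.le hh0.le
      _ = L + h := by field_simp
  set N₂ : ℤ := ⌈(N₁ : ℝ) * (1 - s) / s⌉ with hN₂_def
  have hN₂0 : 0 ≤ N₂ := Int.ceil_nonneg
    (div_nonneg (mul_nonneg (by exact_mod_cast hN₁0) (by linarith)) hs0.le)
  have hN₂ : (N₁ : ℝ) * h * (1 - s) ≤ (N₂ : ℝ) * h * s := by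
    have h1 : (N₁ : ℝ) * (1 - s) / s ≤ (N₂ : ℝ) := Int.le_ceil _
    have h2 : (N₁ : ℝ) * (1 - s) ≤ (N₂ : ℝ) * s := by
      rw [div_le_iff₀ hs0] at h1; linarith
    nlinarith [hh0.le]
  have hM : (N₂ : ℝ) * h ≤ (L + 2) * (1 / s + 1) := by
    have h1 : (N₂ : ℝ) < (N₁ : ℝ) * (1 - s) / s + 1 := Int.ceil_lt_add_one _
    have h2 : (N₂ : ℝ) * s ≤ (N₁ : ℝ) * (1 - s) + s := by
      have h3 := mul_le_mul_of_nonneg_right h1.le hs0.le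
      rw [add_mul, div_mul_cancel₀ _ hs0.ne', one_mul] at h3
      exact h3
    have h4 : (N₂ : ℝ) * h * s ≤ ((N₁ : ℝ) * (1 - s) + s) * h := by
      nlinarith [mul_le_mul_of_nonneg_right h2 hh0.le]
    have h5 : (N₁ : ℝ) * h * (1 - s) ≤ (L + h) * (1 - s) :=
      mul_le_mul_of_nonneg_right hN₁h' (by linarith)
    have h6 : (N₂ : ℝ) * h * s ≤ L + 1 := by
      nlinarith [h4, h5, mul_nonneg hL0 hs0.le, hh1, hh0.le, hs0.le]
    rw [← mul_le_mul_iff_of_pos_right hs0]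
    have h7 : (L + 2) * (1 / s + 1) * s = (L + 2) * (1 + s) := by
      field_simp
    rw [h7]
    nlinarith [h6, mul_nonneg (show (0:ℝ) ≤ L + 2 by linarith) hs0.le]
  -- the index type
  have h0mem : (0 : ℤ) ∈ Finset.Icc (-N₁) N₂ := Finset.mem_Icc.mpr ⟨by omega, hN₂0⟩
  refine ⟨Fin n × (Fin n → {z : ℤ // z ∈ Finset.Icc (-N₁) N₂}), inferInstance,
    ⟨⟨⟨0, by omega⟩, fun _ => ⟨0, h0mem⟩⟩⟩,
    fun p k => Real.exp (if k = p.1 then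
      -(∑ i ∈ Finset.univ.erase p.1, r i * (((p.2 i : ℤ) : ℝ) * h)) / r p.1
      else ((p.2 k : ℤ) : ℝ) * h), ?_, ?_⟩
  · -- admissibility
    rintro ⟨j, a⟩
    refine ⟨fun k => Real.exp_pos _, ?_⟩
    have key : ∀ t : Fin n → ℝ, (∑ k, r k * t k) = 0 →
        (∏ k, Real.exp (t k) ^ r k) = 1 := by
      intro t ht
      have e1 : ∀ k : Fin n, Real.exp (t k) ^ r k = Real.exp (t k * r k) := fun k => by
        rw [Real.rpow_def_of_pos (Real.exp_pos _), Real.log_exp]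
      calc (∏ k, Real.exp (t k) ^ r k) = ∏ k, Real.exp (t k * r k) := by simp_rw [e1]
        _ = Real.exp (∑ k, t k * r k) := (Real.exp_sum _ _).symm
        _ = 1 := by
            rw [show (∑ k, t k * r k) = ∑ k, r k * t k by simp_rw [mul_comm], ht,
              Real.exp_zero]
    have ht0 : (∑ k, r k * (if k = j then
        -(∑ i ∈ Finset.univ.erase j, r i * (((a i : ℤ) : ℝ) * h)) / r j
        else ((a k : ℤ) : ℝ) * h)) = 0 := by
      rw [sum_mul_ite_erase j r (fun k => ((a k : ℤ) : ℝ) * h)]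
      have hrj0 : r j ≠ 0 := (hr j).1.ne'
      field_simp
      rw [neg_add_eq_zero]
      exact Finset.sum_congr rfl fun x _ => by ring
    exact key _ ht0
  · -- the net property
    intro θ hθp hθprod
    set x : Fin n → ℝ := fun k => Real.log (θ k) with hx_def
    have hθx : ∀ k, θ k = Real.exp (x k) := fun k => (Real.exp_log (hθp k)).symm
    have hxsum : (∑ k, r k * x k) = 0 := by
      have h1 : Real.log (∏ k, θ k ^ r k) = 0 := by rw [hθprod, Real.log_one]
      rw [Real.log_prod (fun k _ => (Real.rpow_pos_of_pos (hθp k) _).ne')] at h1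
      simp_rw [Real.log_rpow (hθp _)] at h1
      exact h1
    obtain ⟨j, -, hj⟩ := Finset.exists_max_image Finset.univ θ Finset.univ_nonempty
    have hrj : 0 < r j := (hr j).1
    have hsrj : s ≤ r j := hsle j
    set c : Fin n → ℤ := fun k => max (-N₁) (min N₂ ⌊x k / h⌋) with hc_def
    have hcmem : ∀ k, c k ∈ Finset.Icc (-N₁) N₂ := fun k =>
      Finset.mem_Icc.mpr ⟨le_max_left _ _, max_le (by omega) (min_le_left _ _)⟩
    set a : Fin n → {z : ℤ // z ∈ Finset.Icc (-N₁) N₂} := fun k => ⟨c k, hcmem k⟩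
      with ha_def
    refine ⟨⟨j, a⟩, ?_⟩
    show ∀ k, Real.exp (if k = j then
        -(∑ i ∈ Finset.univ.erase j, r i * (((a i : ℤ) : ℝ) * h)) / r j
        else ((a k : ℤ) : ℝ) * h) ≤ θ k + ε
    -- coordinatewise bound, off-diagonal form
    have hexp_le : ∀ k, Real.exp ((c k : ℝ) * h) ≤ θ k + ε := by
      intro k
      by_cases hfl : -N₁ ≤ ⌊x k / h⌋
      · have h1 : c k ≤ ⌊x k / h⌋ := max_le hfl (min_le_right _ _)
        have h2 : ((c k : ℤ) : ℝ) * h ≤ x k := by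
          have h3 : ((c k : ℤ) : ℝ) ≤ ((⌊x k / h⌋ : ℤ) : ℝ) := by exact_mod_cast h1
          calc ((c k : ℤ) : ℝ) * h ≤ (x k / h) * h :=
                mul_le_mul_of_nonneg_right (h3.trans (Int.floor_le _)) hh0.le
            _ = x k := by field_simp
        have h4 : Real.exp ((c k : ℝ) * h) ≤ θ k := by
          rw [hθx k]; exact Real.exp_le_exp.mpr h2
        linarith
      · push_neg at hfl
        have h1 : c k = -N₁ := by
          have h2 : min N₂ ⌊x k / h⌋ ≤ -N₁ := le_trans (min_le_right _ _) (by omega)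
          exact max_eq_left h2
        have h2 : Real.exp ((c k : ℝ) * h) ≤ ε := by
          rw [h1]
          have h3 : ((-N₁ : ℤ) : ℝ) * h ≤ Real.log ε := by
            push_cast
            rw [hL_def] at hN₁h
            linarith
          calc Real.exp (((-N₁ : ℤ) : ℝ) * h) ≤ Real.exp (Real.log ε) :=
              Real.exp_le_exp.mpr h3
            _ = ε := Real.exp_log hε
        linarith [hθp k]
    intro k
    by_cases hkj : k = j
    · -- the adjusted coordinate
      rw [if_pos hkj, hkj]
      set S : ℝ := ∑ i ∈ Finset.univ.erase j, r i * (((a i : ℤ) : ℝ) * h) with hS_def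
      have hSc : S = ∑ i ∈ Finset.univ.erase j, r i * ((c i : ℝ) * h) := rfl
      have hre : (∑ i ∈ Finset.univ.erase j, r i) = 1 - r j := by
        rw [Finset.sum_erase_eq_sub (Finset.mem_univ j), hr1]
      by_cases hA : ∀ i, x i ≤ (N₂ : ℝ) * h
      · -- Case A : all coordinates moderate
        have hstep : ∀ i, x i - h ≤ (c i : ℝ) * h := by
          intro i
          have hfloor : ⌊x i / h⌋ ≤ N₂ := by
            have h2 : x i / h ≤ (N₂ : ℝ) := (div_le_iff₀ hh0).mpr (hA i)
            calc ⌊x i / h⌋ ≤ ⌊((N₂ : ℤ) : ℝ)⌋ := Int.floor_le_floor (by exact_mod_cast h2)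
              _ = N₂ := Int.floor_intCast N₂
          have h1 : ⌊x i / h⌋ ≤ c i := by
            have h2 : min N₂ ⌊x i / h⌋ = ⌊x i / h⌋ := min_eq_right hfloor
            calc ⌊x i / h⌋ = min N₂ ⌊x i / h⌋ := h2.symm
              _ ≤ c i := le_max_right _ _
          have h3 : ((⌊x i / h⌋ : ℤ) : ℝ) ≤ (c i : ℝ) := by exact_mod_cast h1
          have h4 : x i / h - 1 < ((⌊x i / h⌋ : ℤ) : ℝ) := Int.sub_one_lt_floor _
          have h5 := mul_le_mul_of_nonneg_right ((h4.le).trans h3) hh0.le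
          rw [sub_mul, div_mul_cancel₀ _ hh0.ne', one_mul] at h5
          exact h5
        have hS1 : -(r j * x j) - h * (1 - r j) ≤ S := by
          have h1 : (∑ i ∈ Finset.univ.erase j, r i * (x i - h)) ≤ S := by
            rw [hSc]
            exact Finset.sum_le_sum fun i _ =>
              mul_le_mul_of_nonneg_left (hstep i) (hr i).1.le
          have h2 : (∑ i ∈ Finset.univ.erase j, r i * (x i - h))
              = (∑ i ∈ Finset.univ.erase j, r i * x i) - h * (1 - r j) := by
            simp_rw [mul_sub]
            rw [Finset.sum_sub_distrib, ← Finset.sum_mul, hre]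
            ring
          have h3 : (∑ i ∈ Finset.univ.erase j, r i * x i) = -(r j * x j) := by
            rw [Finset.sum_erase_eq_sub (Finset.mem_univ j), hxsum]
            ring
          rw [h2, h3] at h1
          exact h1
        have hkey : h * (1 - r j) ≤ h / s * r j := by
          rw [div_mul_eq_mul_div, le_div_iff₀ hs0]
          have h1 : h * s ≤ h * r j := mul_le_mul_of_nonneg_left hsrj hh0.le
          nlinarith [mul_nonneg (mul_nonneg hh0.le hs0.le) hrj.le]
        have htj : -S / r j ≤ x j + h / s := by
          rw [div_le_iff₀ hrj]
          have h5 : -S ≤ r j * x j + h * (1 - r j) := by linarith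
          have h6 : r j * x j + h / s * r j = (x j + h / s) * r j := by ring
          linarith [hkey]
        have hexps : Real.exp (h / s) ≤ 1 + ε / C := by
          have h1 : h / s ≤ Real.log (1 + ε / C) := by
            rw [div_le_iff₀ hs0]
            linarith [hhs]
          calc Real.exp (h / s) ≤ Real.exp (Real.log (1 + ε / C)) :=
              Real.exp_le_exp.mpr h1
            _ = 1 + ε / C := Real.exp_log (by linarith)
        have hθkC : θ j ≤ C := by
          rw [hθx j, hC_def]
          exact Real.exp_le_exp.mpr ((hA j).trans hM)
        calc Real.exp (-S / r j) ≤ Real.exp (x j + h / s) := Real.exp_le_exp.mpr htj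
          _ = θ j * Real.exp (h / s) := by rw [Real.exp_add, ← hθx j]
          _ ≤ θ j * (1 + ε / C) := mul_le_mul_of_nonneg_left hexps (hθp j).le
          _ = θ j + θ j * (ε / C) := by ring
          _ ≤ θ j + ε := by
              have h1 : θ j * (ε / C) ≤ C * (ε / C) :=
                mul_le_mul_of_nonneg_right hθkC hεC.le
              have h2 : C * (ε / C) = ε := by
                rw [mul_comm, div_mul_cancel₀ _ hC0.ne']
              linarith
      · -- Case B : some coordinate is huge
        push_neg at hA
        obtain ⟨k₀, hk₀⟩ := hA
        have hAnn : (0 : ℝ) ≤ (N₁ : ℝ) * h := by positivity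
        have hSlb : -((N₁ : ℝ) * h) * (1 - r j) ≤ S := by
          have h1 : (∑ i ∈ Finset.univ.erase j, r i * (-((N₁ : ℝ) * h))) ≤ S := by
            rw [hSc]
            refine Finset.sum_le_sum fun i _ => mul_le_mul_of_nonneg_left ?_ (hr i).1.le
            have h2 : ((-N₁ : ℤ) : ℝ) ≤ (c i : ℝ) := by
              exact_mod_cast le_max_left (-N₁) (min N₂ ⌊x i / h⌋)
            push_cast at h2
            nlinarith [hh0.le]
          rw [← Finset.sum_mul, hre] at h1
          linarith
        have htj2 : -S / r j ≤ (N₂ : ℝ) * h := by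
          rw [div_le_iff₀ hrj]
          have e2 : (N₁ : ℝ) * h * (1 - r j) * s ≤ (N₂ : ℝ) * h * (r j) * s := by
            nlinarith [mul_le_mul_of_nonneg_left hsrj hAnn,
              mul_le_mul_of_nonneg_right hN₂ hrj.le, hAnn, hs0.le, hrj.le,
              (hr j).2.le]
          have e3 : (N₁ : ℝ) * h * (1 - r j) ≤ (N₂ : ℝ) * h * (r j) :=
            le_of_mul_le_mul_right (by linarith) hs0
          linarith
        have h1 : Real.exp ((N₂ : ℝ) * h) ≤ θ j := by
          calc Real.exp ((N₂ : ℝ) * h) ≤ Real.exp (x k₀) := Real.exp_le_exp.mpr hk₀.le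
            _ = θ k₀ := (hθx k₀).symm
            _ ≤ θ j := hj k₀ (Finset.mem_univ k₀)
        calc Real.exp (-S / r j) ≤ Real.exp ((N₂ : ℝ) * h) := Real.exp_le_exp.mpr htj2
          _ ≤ θ j := h1
          _ ≤ θ j + ε := by linarith
    · rw [if_neg hkj]
      exact hexp_le k

set_option maxHeartbeats 1600000 in
theorem stmt9 {E : Type*} [AddCommGroup E] [Lattice E]
    [CovariantClass E E (· + ·) (· ≤ ·)]
    [Module ℝ E] [PosSMulMono ℝ E]
    {F : Type*} [AddCommGroup F] [Lattice F]
    [CovariantClass F F (· + ·) (· ≤ ·)]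
    [Module ℝ F] [PosSMulMono ℝ F]
    (harchE : ∀ f g : E, (∀ n : ℕ, (n : ℝ) • f ≤ g) → f ≤ 0)
    (harchF : ∀ f g : F, (∀ n : ℕ, (n : ℝ) • f ≤ g) → f ≤ 0)
    (hwgmE : ∀ (n : ℕ) (f : Fin n → E) (r : Fin n → ℝ),
      (∀ k, 0 < r k ∧ r k < 1) → (∑ k, r k) = 1 → ∃ m, IsGLB (wSet n f r) m)
    (hwgmF : ∀ (n : ℕ) (f : Fin n → F) (r : Fin n → ℝ),
      (∀ k, 0 < r k ∧ r k < 1) → (∑ k, r k) = 1 → ∃ m, IsGLB (wSet n f r) m)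
    (n : ℕ) (hn : 1 ≤ n)
    (r : Fin n → ℝ) (hr : ∀ k, 0 < r k ∧ r k < 1) (hr1 : (∑ k, r k) = 1)
    (T : E →ₗ[ℝ] F) :
    (∀ f g : E, T (f ⊔ g) = T f ⊔ T g) ↔
      (∀ (f : Fin n → E) (m : E), IsGLB (wSet n f r) m →
        IsGLB (wSet n (fun k => T (f k)) r) (T m)) := by
  constructor
  · -- forward direction
    intro hT f m hm
    have habs : ∀ x : E, T |x| = |T x| := by
      intro x
      have h1 : |x| = x ⊔ -x := rfl
      have h2 : |T x| = T x ⊔ -(T x) := rfl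
      rw [h1, h2, hT, map_neg]
    have hmono : ∀ x y : E, x ≤ y → T x ≤ T y := by
      intro x y hxy
      have h1 : x ⊔ y = y := sup_eq_right.mpr hxy
      calc T x ≤ T x ⊔ T y := le_sup_left
        _ = T (x ⊔ y) := (hT x y).symm
        _ = T y := by rw [h1]
    have hinf : ∀ x y : E, T (x ⊓ y) = T x ⊓ T y := by
      intro x y
      have h1 : x ⊓ y = -(-x ⊔ -y) := by rw [neg_sup, neg_neg, neg_neg]
      rw [h1, map_neg, hT, map_neg, map_neg, neg_sup, neg_neg, neg_neg]
    have hinf' : ∀ {ι : Type} (t : Finset ι) (ht : t.Nonempty) (g : ι → E),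
        T (t.inf' ht g) = t.inf' ht (fun i => T (g i)) := by
      intro ι t ht g
      induction ht using Finset.Nonempty.cons_induction with
      | singleton i => simp
      | cons i t hit ht ih => rw [Finset.inf'_cons ht, Finset.inf'_cons ht, hinf, ih]
    constructor
    · -- T m is a lower bound
      rintro y ⟨θ, hθp, hθprod, rfl⟩
      have hmem : (∑ k, (r k * θ k) • |f k|) ∈ wSet n f r := ⟨θ, hθp, hθprod, rfl⟩
      have h1 := hmono _ _ (hm.1 hmem)
      calc T m ≤ T (∑ k, (r k * θ k) • |f k|) := h1
        _ = ∑ k, (r k * θ k) • |T (f k)| := by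
            rw [map_sum]
            exact Finset.sum_congr rfl fun k _ => by rw [map_smul, habs]
    · -- T m is the greatest lower bound
      intro b hb
      have hU : ∀ k : Fin n, (0 : E) ≤ |f k| := fun k => abs_nonneg _
      have hTU : (0 : F) ≤ T (∑ k, |f k|) := by
        rw [map_sum]
        refine lsum_nonneg _ _ fun k _ => ?_
        rw [habs]
        exact abs_nonneg _
      have key : ∀ N : ℕ, (N : ℝ) • (b - T m) ≤ T (∑ k, |f k|) := by
        intro N
        rcases Nat.eq_zero_or_pos N with hN | hN
        · subst hN; simpa using hTU
        · set ε : ℝ := (N : ℝ)⁻¹ with hε_def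
          have hNpos : (0 : ℝ) < (N : ℝ) := by exact_mod_cast hN
          have hε : 0 < ε := by positivity
          have hε1 : ε ≤ 1 := by
            rw [hε_def, inv_eq_one_div, div_le_one hNpos]
            exact_mod_cast hN
          obtain ⟨ι, hft, hne, Θ, hΘadm, hΘnet⟩ := netLemma n hn r hr hr1 hε hε1
          haveI := hft
          haveI := hne
          set z : E := Finset.univ.inf' Finset.univ_nonempty
            (fun i => ∑ k, (r k * Θ i k) • |f k|) with hz_def
          have hz1 : z ≤ m + ε • (∑ k, |f k|) := by
            rw [← sub_le_iff_le_add]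
            refine hm.2 ?_
            rintro y ⟨θ, hθp, hθprod, rfl⟩
            obtain ⟨i, hi⟩ := hΘnet θ hθp hθprod
            rw [sub_le_iff_le_add]
            calc z ≤ ∑ k, (r k * Θ i k) • |f k| := Finset.inf'_le _ (Finset.mem_univ i)
              _ ≤ ∑ k, (r k * θ k + ε) • |f k| := by
                  refine lsum_le_lsum _ _ _ fun k _ => smul_coeff_mono ?_ (hU k)
                  have h1 := hi k
                  have h2 := (hr k).1
                  have h3 := (hr k).2
                  nlinarith
              _ = (∑ k, (r k * θ k) • |f k|) + ε • (∑ k, |f k|) := by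
                  simp_rw [add_smul]
                  rw [Finset.sum_add_distrib, Finset.smul_sum]
          have hz2 : b ≤ T z := by
            rw [hz_def, hinf']
            refine Finset.le_inf' _ _ fun i _ => ?_
            refine hb ⟨Θ i, (hΘadm i).1, (hΘadm i).2, ?_⟩
            rw [map_sum]
            exact Finset.sum_congr rfl fun k _ => by rw [map_smul, habs]
          have hz3 : T z ≤ T m + ε • T (∑ k, |f k|) := by
            have := hmono _ _ hz1
            rwa [map_add, map_smul] at this
          have h4 : b - T m ≤ ε • T (∑ k, |f k|) := by
            rw [sub_le_iff_le_add]
            calc b ≤ T z := hz2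
              _ ≤ T m + ε • T (∑ k, |f k|) := hz3
              _ = ε • T (∑ k, |f k|) + T m := by rw [add_comm]
          have h5 := smul_le_smul_of_nonneg_left h4 (le_of_lt hNpos)
          rw [smul_smul] at h5
          rw [hε_def, mul_inv_cancel₀ hNpos.ne', one_smul] at h5
          exact h5
      have h6 := harchF (b - T m) _ key
      exact sub_nonpos.mp h6
  · -- reverse direction
    intro h f g
    have habs : ∀ x : E, T |x| = |T x| := by
      intro x
      have h1 : IsGLB (wSet n (fun _ => x) r) |x| :=
        (isLeast_wSet_const n r hr hr1 x).isGLB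
      have h2 := h (fun _ => x) |x| h1
      have h3 : IsGLB (wSet n (fun _ => T x) r) |T x| :=
        (isLeast_wSet_const n r hr hr1 (T x)).isGLB
      exact h2.unique h3
    haveI : IsOrderedAddMonoid E := { add_le_add_left := fun a b h c => add_le_add_left h c }
    haveI : IsOrderedAddMonoid F := { add_le_add_left := fun a b h c => add_le_add_left h c }
    have key : f ⊔ g = (2⁻¹ : ℝ) • (f + g + |g - f|) :=
      sup_eq_half_smul_add_add_abs_sub' ℝ f g
    rw [key, map_smul, map_add, map_add, habs, map_sub,
      ← sup_eq_half_smul_add_add_abs_sub' ℝ (T f) (T g)]
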